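/- arXiv:2002.10629 — 3 statements merged into one kernel-verified Lean document; each statement's English description precedes it below -/
import Mathlib

section
/- Let f : ℝⁿ × ℝᵐ → ℝ be differentiable with L-Lipschitz gradient (L > 0) and bounded below by a constant J_c. Consider exact alternating minimization iterates (x_k, y_k). Then for every positive integer K, min_{0 ≤ k ≤ K} ‖∇f(x_k, y_k)‖² ≤ 2L·(f(x₀, y₀) − J_c)/K; in particular the process converges to a stationary point with non-asymptotic sublinear rate O(1/√K). -/
open intervalIntegral in
lemma descent_lemma {E : Type*} [NormedAddCommGroup E] [InnerProductSpace ℝ E]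
    [CompleteSpace E] (f : E → ℝ) (hdiff : Differentiable ℝ f) {L : ℝ} (hL : 0 ≤ L)
    (hlip : ∀ p q, ‖gradient f p - gradient f q‖ ≤ L * ‖p - q‖) (p q : E) :
    f q ≤ f p + inner ℝ (gradient f p) (q - p) + L / 2 * ‖q - p‖ ^ 2 := by
  set v := q - p with hv
  set c : ℝ → E := fun t => p + t • v with hc
  have hct : ∀ t : ℝ, HasDerivAt c v t := by
    intro t
    simpa [hc] using ((hasDerivAt_id t).smul_const v).const_add p
  have hφ : ∀ t : ℝ, HasDerivAt (fun t => f (c t)) (inner ℝ (gradient f (c t)) v) t := by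
    intro t
    have hg : HasFDerivAt f (InnerProductSpace.toDual ℝ E (gradient f (c t))) (c t) :=
      ((hdiff (c t)).hasGradientAt).hasFDerivAt
    have := hg.comp_hasDerivAt t (hct t)
    simp only [InnerProductSpace.toDual_apply_apply] at this
    exact this
  have hGlip : LipschitzWith (Real.toNNReal L) (gradient f) := by
    apply LipschitzWith.of_dist_le_mul
    intro a b
    rw [dist_eq_norm, dist_eq_norm]
    exact (hlip a b).trans (by rw [Real.coe_toNNReal L hL])
  have hGcont : Continuous (gradient f) := hGlip.continuous
  have hcont : Continuous fun t : ℝ => (inner ℝ (gradient f (c t)) v : ℝ) := by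
    exact (Continuous.inner (hGcont.comp (by continuity)) continuous_const)
  have hftc : ∫ t in (0:ℝ)..1, inner ℝ (gradient f (c t)) v = f q - f p := by
    have := integral_eq_sub_of_hasDerivAt (f := fun t => f (c t))
      (fun t _ => hφ t) (hcont.intervalIntegrable 0 1)
    simpa [hc, hv] using this
  have hbound : ∀ t ∈ Set.Icc (0:ℝ) 1,
      (inner ℝ (gradient f (c t)) v : ℝ) ≤ inner ℝ (gradient f p) v + L * ‖v‖ ^ 2 * t := by
    intro t ht
    have h1 : (inner ℝ (gradient f (c t)) v : ℝ) - inner ℝ (gradient f p) v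
        = inner ℝ (gradient f (c t) - gradient f p) v := by rw [inner_sub_left]
    have h2 : (inner ℝ (gradient f (c t) - gradient f p) v : ℝ)
        ≤ ‖gradient f (c t) - gradient f p‖ * ‖v‖ := real_inner_le_norm _ _
    have h3 : ‖gradient f (c t) - gradient f p‖ ≤ L * (t * ‖v‖) := by
      have := hlip (c t) p
      simpa [hc, norm_smul, abs_of_nonneg ht.1] using this
    nlinarith [norm_nonneg v, norm_nonneg (gradient f (c t) - gradient f p), ht.1]
  have hint : ∫ t in (0:ℝ)..1, inner ℝ (gradient f (c t)) v
      ≤ ∫ t in (0:ℝ)..1, (inner ℝ (gradient f p) v + L * ‖v‖ ^ 2 * t) := by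
    apply integral_mono_on (by norm_num) (hcont.intervalIntegrable 0 1)
      ((by continuity : Continuous fun t : ℝ =>
        (inner ℝ (gradient f p) v : ℝ) + L * ‖v‖ ^ 2 * t).intervalIntegrable 0 1)
    exact hbound
  have hval : ∫ t in (0:ℝ)..1, ((inner ℝ (gradient f p) v : ℝ) + L * ‖v‖ ^ 2 * t)
      = inner ℝ (gradient f p) v + L / 2 * ‖v‖ ^ 2 := by
    rw [integral_add (intervalIntegrable_const)
      (by apply Continuous.intervalIntegrable; continuity), integral_const_mul, integral_id]
    simp
    ring
  linarith [hftc ▸ hint, hval ▸ hint]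

/-- Pairing of the two blocks of variables into the (L²) product space ℝⁿ × ℝᵐ. -/
noncomputable def pairL2 {n m : ℕ} (x : EuclideanSpace ℝ (Fin n)) (y : EuclideanSpace ℝ (Fin m)) :
    WithLp 2 (EuclideanSpace ℝ (Fin n) × EuclideanSpace ℝ (Fin m)) :=
  (WithLp.equiv 2 _).symm (x, y)

lemma pairL2_eta {n m : ℕ} (p : WithLp 2 (EuclideanSpace ℝ (Fin n) × EuclideanSpace ℝ (Fin m))) :
    pairL2 p.fst p.snd = p := rfl

lemma snd_grad_zero {n m : ℕ}
    (f : WithLp 2 (EuclideanSpace ℝ (Fin n) × EuclideanSpace ℝ (Fin m)) → ℝ)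
    (hdiff : Differentiable ℝ f)
    (a : EuclideanSpace ℝ (Fin n)) (b : EuclideanSpace ℝ (Fin m))
    (hmin : ∀ y', f (pairL2 a b) ≤ f (pairL2 a y')) :
    (gradient f (pairL2 a b)).snd = 0 := by
  let ι : EuclideanSpace ℝ (Fin m) →L[ℝ]
      WithLp 2 (EuclideanSpace ℝ (Fin n) × EuclideanSpace ℝ (Fin m)) :=
    ((WithLp.prodContinuousLinearEquiv 2 ℝ _ _).symm :
        (EuclideanSpace ℝ (Fin n) × EuclideanSpace ℝ (Fin m)) ≃L[ℝ]
          WithLp 2 (EuclideanSpace ℝ (Fin n) × EuclideanSpace ℝ (Fin m))).toContinuousLinearMap.comp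
      (ContinuousLinearMap.inr ℝ _ _)
  have key : ∀ y', pairL2 a y' = (pairL2 a b - ι b) + ι y' := by
    intro y'
    have h1 : ((pairL2 a b - ι b) + ι y').fst = a := by
      rw [WithLp.add_fst, WithLp.sub_fst]
      show a - 0 + 0 = a; simp
    have h2 : ((pairL2 a b - ι b) + ι y').snd = y' := by
      rw [WithLp.add_snd, WithLp.sub_snd]
      show b - b + y' = y'; simp
    calc pairL2 a y' = pairL2 ((pairL2 a b - ι b) + ι y').fst ((pairL2 a b - ι b) + ι y').snd := by
          rw [h1, h2]
      _ = _ := pairL2_eta _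
  have hinner : HasFDerivAt (fun y' => pairL2 a y') ι b := by
    have h : (fun y' => pairL2 a y') = fun y' => (pairL2 a b - ι b) + ι y' := funext key
    rw [h]
    exact (ι.hasFDerivAt).const_add _
  have hg : HasFDerivAt (fun y' => f (pairL2 a y')) ((fderiv ℝ f (pairL2 a b)).comp ι) b :=
    ((hdiff (pairL2 a b)).hasFDerivAt).comp b hinner
  have hloc : IsLocalMin (fun y' => f (pairL2 a y')) b :=
    Filter.Eventually.of_forall (fun y' => hmin y')
  have hzero : (fderiv ℝ f (pairL2 a b)).comp ι = 0 := by
    rw [← hg.fderiv]; exact hloc.fderiv_eq_zero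
  have hfd : fderiv ℝ f (pairL2 a b)
      = InnerProductSpace.toDual ℝ _ (gradient f (pairL2 a b)) :=
    toDual_gradient.symm
  have hv : ∀ v, (inner ℝ ((gradient f (pairL2 a b)).snd) v : ℝ) = 0 := by
    intro v
    have h0 : (fderiv ℝ f (pairL2 a b)) (ι v) = 0 := by
      have := congrFun (congrArg DFunLike.coe hzero) v
      simpa using this
    rw [hfd, InnerProductSpace.toDual_apply_apply, WithLp.prod_inner_apply] at h0
    simp only [WithLp.ofLp_fst, WithLp.ofLp_snd] at h0
    have h1 : (ι v).fst = 0 := rfl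
    have h2 : (ι v).snd = v := rfl
    rw [h1, h2, inner_zero_right, zero_add] at h0
    exact h0
  have := hv (gradient f (pairL2 a b)).snd
  rwa [inner_self_eq_zero] at this

lemma shift_eq {n m : ℕ} (a : EuclideanSpace ℝ (Fin n)) (b : EuclideanSpace ℝ (Fin m))
    (G : WithLp 2 (EuclideanSpace ℝ (Fin n) × EuclideanSpace ℝ (Fin m))) (c : ℝ)
    (h : G.snd = 0) : pairL2 a b - c • G = pairL2 (a - c • G.fst) b := by
  have h1 : (pairL2 a b - c • G).fst = a - c • G.fst := by
    rw [WithLp.sub_fst, WithLp.smul_fst]; rfl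
  have h2 : (pairL2 a b - c • G).snd = b := by
    rw [WithLp.sub_snd, WithLp.smul_snd, h]
    show b - c • (0 : EuclideanSpace ℝ (Fin m)) = b; simp
  calc pairL2 a b - c • G = pairL2 (pairL2 a b - c • G).fst (pairL2 a b - c • G).snd := rfl
    _ = pairL2 (a - c • G.fst) b := by rw [h1, h2]

/-- **Theorem 1 (global convergence of exact alternating minimization).**
If `f : ℝⁿ × ℝᵐ → ℝ` is differentiable with `L`-Lipschitz gradient (`L > 0`) and bounded
below by `Jc`, and `(x k, y k)` are exact alternating minimization iterates
(`y 0 ∈ argmin_y f (x 0, y)`, `x (k+1) ∈ argmin_x f (x, y k)`,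
`y (k+1) ∈ argmin_y f (x (k+1), y)`), then for every positive `K`,
`min_{0 ≤ k ≤ K} ‖∇f(x k, y k)‖² ≤ 2 L (f (x 0, y 0) − Jc) / K`. -/
theorem am_global_convergence_rate
    (n m : ℕ) (L : ℝ) (hL : 0 < L) (Jc : ℝ)
    (f : WithLp 2 (EuclideanSpace ℝ (Fin n) × EuclideanSpace ℝ (Fin m)) → ℝ)
    (hdiff : Differentiable ℝ f)
    (hlip : ∀ p q, ‖gradient f p - gradient f q‖ ≤ L * ‖p - q‖)
    (hbdd : ∀ p, Jc ≤ f p)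
    (x : ℕ → EuclideanSpace ℝ (Fin n)) (y : ℕ → EuclideanSpace ℝ (Fin m))
    (hy0 : ∀ y', f (pairL2 (x 0) (y 0)) ≤ f (pairL2 (x 0) y'))
    (hx : ∀ k : ℕ, ∀ x', f (pairL2 (x (k + 1)) (y k)) ≤ f (pairL2 x' (y k)))
    (hy : ∀ k : ℕ, ∀ y', f (pairL2 (x (k + 1)) (y (k + 1))) ≤ f (pairL2 (x (k + 1)) y')) :
    ∀ K : ℕ, 0 < K →
      ∃ k ≤ K, ‖gradient f (pairL2 (x k) (y k))‖ ^ 2 ≤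
        2 * L * (f (pairL2 (x 0) (y 0)) - Jc) / K := by
  intro K hK
  set p : ℕ → WithLp 2 (EuclideanSpace ℝ (Fin n) × EuclideanSpace ℝ (Fin m)) :=
    fun k => pairL2 (x k) (y k) with hp
  set G : ℕ → WithLp 2 (EuclideanSpace ℝ (Fin n) × EuclideanSpace ℝ (Fin m)) :=
    fun k => gradient f (p k) with hG
  have hsnd : ∀ k, (G k).snd = 0 := by
    intro k
    cases k with
    | zero => exact snd_grad_zero f hdiff (x 0) (y 0) hy0
    | succ j => exact snd_grad_zero f hdiff (x (j + 1)) (y (j + 1)) (hy j)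
  have hstep : ∀ k, f (p (k + 1)) ≤ f (p k) - 1 / (2 * L) * ‖G k‖ ^ 2 := by
    intro k
    set q := p k - (1 / L) • G k with hq
    have hqpair : q = pairL2 (x k - (1 / L) • (G k).fst) (y k) :=
      shift_eq (x k) (y k) (G k) (1 / L) (hsnd k)
    have hdesc : f q ≤ f (p k) + inner ℝ (G k) (q - p k) + L / 2 * ‖q - p k‖ ^ 2 :=
      descent_lemma f hdiff hL.le hlip (p k) q
    have hdiffpt : q - p k = -((1 / L) • G k) := by rw [hq]; abel
    have hinner : (inner ℝ (G k) (q - p k) : ℝ) = -(1 / L) * ‖G k‖ ^ 2 := by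
      rw [hdiffpt, inner_neg_right, real_inner_smul_right, real_inner_self_eq_norm_sq]
      ring
    have hnorm : ‖q - p k‖ ^ 2 = (1 / L) ^ 2 * ‖G k‖ ^ 2 := by
      rw [hdiffpt, norm_neg, norm_smul]
      rw [Real.norm_eq_abs, abs_of_pos (by positivity : (0:ℝ) < 1 / L)]
      ring
    have hchain : f (p (k + 1)) ≤ f q := by
      calc f (p (k + 1)) ≤ f (pairL2 (x (k + 1)) (y k)) := hy k (y k)
        _ ≤ f (pairL2 (x k - (1 / L) • (G k).fst) (y k)) := hx k _
        _ = f q := by rw [hqpair]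
    have : f q ≤ f (p k) - 1 / (2 * L) * ‖G k‖ ^ 2 := by
      rw [hinner, hnorm] at hdesc
      have hL' : L ≠ 0 := hL.ne'
      have : L / 2 * ((1 / L) ^ 2 * ‖G k‖ ^ 2) - (1 / L) * ‖G k‖ ^ 2
          = -(1 / (2 * L) * ‖G k‖ ^ 2) := by field_simp; ring
      linarith
    linarith [hchain]
  have hsum : ∑ k ∈ Finset.range K, 1 / (2 * L) * ‖G k‖ ^ 2 ≤ f (p 0) - Jc := by
    have h1 : ∑ k ∈ Finset.range K, 1 / (2 * L) * ‖G k‖ ^ 2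
        ≤ ∑ k ∈ Finset.range K, (f (p k) - f (p (k + 1))) := by
      apply Finset.sum_le_sum
      intro k _
      linarith [hstep k]
    have h2 : ∑ k ∈ Finset.range K, (f (p k) - f (p (k + 1))) = f (p 0) - f (p K) :=
      Finset.sum_range_sub' (fun k => f (p k)) K
    linarith [hbdd (p K)]
  obtain ⟨k0, hk0mem, hk0min⟩ := Finset.exists_min_image (Finset.range K)
    (fun k => ‖G k‖ ^ 2) ⟨0, Finset.mem_range.mpr hK⟩
  refine ⟨k0, (Finset.mem_range.mp hk0mem).le, ?_⟩
  have hcard : (K : ℝ) * (1 / (2 * L) * ‖G k0‖ ^ 2)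
      ≤ ∑ k ∈ Finset.range K, 1 / (2 * L) * ‖G k‖ ^ 2 := by
    have := Finset.card_nsmul_le_sum (Finset.range K)
      (fun k => 1 / (2 * L) * ‖G k‖ ^ 2) (1 / (2 * L) * ‖G k0‖ ^ 2)
      (fun i hi => by
        have := hk0min i hi
        have h2L : (0:ℝ) ≤ 1 / (2 * L) := by positivity
        exact mul_le_mul_of_nonneg_left this h2L)
    simpa [Finset.card_range, nsmul_eq_mul] using this
  have hKpos : (0:ℝ) < K := Nat.cast_pos.mpr hK
  rw [le_div_iff₀ hKpos]
  have : (K : ℝ) * (1 / (2 * L) * ‖G k0‖ ^ 2) ≤ f (p 0) - Jc := le_trans hcard hsum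
  have h2L : (0:ℝ) < 2 * L := by linarith
  calc ‖gradient f (pairL2 (x k0) (y k0))‖ ^ 2 * K = (2 * L) * ((K:ℝ) * (1 / (2 * L) * ‖G k0‖ ^ 2)) := by
        field_simp
        ring
    _ ≤ (2 * L) * (f (p 0) - Jc) := by nlinarith
    _ = 2 * L * (f (pairL2 (x 0) (y 0)) - Jc) := rfl
end

section
/- Let S ≥ 1, let E, F, G ∈ ℝ^{S×S} with E diagonal and invertible and G invertible, and let T > 0. Define the 2S × 2S block matrix A(T) with top-left block E, top-right block 0, bottom-left block whose (i,j) entry is F_{ij} T^{j−i}, and bottom-right block whose (i,j) entry is G_{ij} T^{S−i+j} (indices 1 ≤ i, j ≤ S). Set U = E⁻¹, W = G⁻¹, and V = −W F U. Then A(T) is invertible and A(T)⁻¹ is the block matrix with top-left block U, top-right block 0, bottom-left block whose (i,j) entry is V_{ij} T^{j−i−S}, and bottom-right block whose (i,j) entry is W_{ij} T^{j−i−S}. In particular every entry of A(T)⁻¹ is a fixed constant times a power of T. -/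
open Matrix

/-- **Closed-form inverse of the boundary-condition mapping matrix `A(T)`.**
With `E` diagonal and invertible, `G` invertible, `T > 0`, the block matrix
`A(T) = [[E, 0], [(Fᵢⱼ T^{j−i}), (Gᵢⱼ T^{S−i+j})]]` is invertible with inverse
`[[U, 0], [(Vᵢⱼ T^{j−i−S}), (Wᵢⱼ T^{j−i−S})]]`, where `U = E⁻¹`, `W = G⁻¹`,
`V = −W F U`; in particular every entry of `A(T)⁻¹` is a constant times a power of `T`. -/
theorem mapping_matrix_closed_form_inverse
    (S : ℕ) (hS : 1 ≤ S) (E F G : Matrix (Fin S) (Fin S) ℝ)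
    (hEdiag : E.IsDiag) (hE : IsUnit E) (hG : IsUnit G) (T : ℝ) (hT : 0 < T) :
    IsUnit
      (Matrix.fromBlocks E 0
        (Matrix.of fun i j : Fin S => F i j * T ^ (((j : ℕ) : ℤ) - ((i : ℕ) : ℤ)))
        (Matrix.of fun i j : Fin S => G i j * T ^ ((S : ℤ) - ((i : ℕ) : ℤ) + ((j : ℕ) : ℤ)))) ∧
    (Matrix.fromBlocks E 0
        (Matrix.of fun i j : Fin S => F i j * T ^ (((j : ℕ) : ℤ) - ((i : ℕ) : ℤ)))
        (Matrix.of fun i j : Fin S => G i j * T ^ ((S : ℤ) - ((i : ℕ) : ℤ) + ((j : ℕ) : ℤ))))⁻¹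
      = Matrix.fromBlocks E⁻¹ 0
        (Matrix.of fun i j : Fin S =>
          (-(G⁻¹ * F * E⁻¹)) i j * T ^ (((j : ℕ) : ℤ) - ((i : ℕ) : ℤ) - (S : ℤ)))
        (Matrix.of fun i j : Fin S =>
          G⁻¹ i j * T ^ (((j : ℕ) : ℤ) - ((i : ℕ) : ℤ) - (S : ℤ))) := by
  have hT0 : T ≠ 0 := ne_of_gt hT
  set C : Matrix (Fin S) (Fin S) ℝ :=
    Matrix.of fun i j : Fin S => F i j * T ^ (((j : ℕ) : ℤ) - ((i : ℕ) : ℤ)) with hC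
  set D : Matrix (Fin S) (Fin S) ℝ :=
    Matrix.of fun i j : Fin S => G i j * T ^ ((S : ℤ) - ((i : ℕ) : ℤ) + ((j : ℕ) : ℤ)) with hD
  set C' : Matrix (Fin S) (Fin S) ℝ :=
    Matrix.of fun i j : Fin S =>
      (-(G⁻¹ * F * E⁻¹)) i j * T ^ (((j : ℕ) : ℤ) - ((i : ℕ) : ℤ) - (S : ℤ)) with hC'
  set D' : Matrix (Fin S) (Fin S) ℝ :=
    Matrix.of fun i j : Fin S => G⁻¹ i j * T ^ (((j : ℕ) : ℤ) - ((i : ℕ) : ℤ) - (S : ℤ)) with hD'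
  have hEdet : IsUnit E.det := (Matrix.isUnit_iff_isUnit_det E).mp hE
  have hGdet : IsUnit G.det := (Matrix.isUnit_iff_isUnit_det G).mp hG
  have hEinv_diag : E⁻¹.IsDiag := by
    rw [← hEdiag.diagonal_diag, Matrix.inv_diagonal]
    exact Matrix.isDiag_diagonal _
  -- D * D' = 1
  have hDD' : D * D' = 1 := by
    ext i j
    simp only [Matrix.mul_apply, hD, hD', Matrix.of_apply]
    have : ∀ k : Fin S, G i k * T ^ ((S : ℤ) - ((i : ℕ) : ℤ) + ((k : ℕ) : ℤ)) *
        (G⁻¹ k j * T ^ (((j : ℕ) : ℤ) - ((k : ℕ) : ℤ) - (S : ℤ)))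
        = G i k * G⁻¹ k j * T ^ (((j : ℕ) : ℤ) - ((i : ℕ) : ℤ)) := by
      intro k
      rw [mul_mul_mul_comm, ← zpow_add₀ hT0]
      ring_nf
    simp_rw [this, ← Finset.sum_mul, ← Matrix.mul_apply, Matrix.mul_nonsing_inv _ hGdet]
    rcases eq_or_ne i j with rfl | h
    · simp
    · simp [Matrix.one_apply_ne h]
  -- C * E⁻¹ + D * C' = 0
  have hCE : ∀ i j, (C * E⁻¹) i j = (F * E⁻¹) i j * T ^ (((j : ℕ) : ℤ) - ((i : ℕ) : ℤ)) := by
    intro i j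
    simp only [Matrix.mul_apply, hC, Matrix.of_apply, Finset.sum_mul]
    refine Finset.sum_congr rfl fun k _ => ?_
    rcases eq_or_ne k j with rfl | h
    · ring
    · rw [hEinv_diag h]
      simp
  have hDC' : ∀ i j, (D * C') i j
      = (G * (-(G⁻¹ * F * E⁻¹))) i j * T ^ (((j : ℕ) : ℤ) - ((i : ℕ) : ℤ)) := by
    intro i j
    simp only [Matrix.mul_apply, hD, hC', Matrix.of_apply, Finset.sum_mul]
    refine Finset.sum_congr rfl fun k _ => ?_
    rw [mul_mul_mul_comm, ← zpow_add₀ hT0]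
    ring_nf
  have hlow : C * E⁻¹ + D * C' = 0 := by
    ext i j
    have : G * -(G⁻¹ * F * E⁻¹) = -(F * E⁻¹) := by
      rw [Matrix.mul_neg, ← Matrix.mul_assoc, ← Matrix.mul_assoc,
        Matrix.mul_nonsing_inv _ hGdet, Matrix.one_mul]
    simp [Matrix.add_apply, hCE, hDC', this]
  have hAB : (Matrix.fromBlocks E 0 C D) * (Matrix.fromBlocks E⁻¹ 0 C' D') = 1 := by
    rw [Matrix.fromBlocks_multiply]
    rw [Matrix.mul_nonsing_inv _ hEdet]
    simp only [Matrix.mul_zero, Matrix.zero_mul, add_zero, zero_add, hlow, hDD',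
      Matrix.fromBlocks_one]
  have hBA := mul_eq_one_comm.mp hAB
  refine ⟨⟨⟨_, _, hAB, hBA⟩, rfl⟩, Matrix.inv_eq_right_inv hAB⟩
end

section
/- Let N ≥ 0, i ≥ 0 be integers and T > 0. Let c ∈ ℝ^{(N+1)×3} be a coefficient matrix and define the curve p : ℝ → ℝ³ by p(t) = cᵀ β(t) with β(t) = (1, t, t², …, t^N)ᵀ. Define Q_i(T) ∈ ℝ^{(N+1)×(N+1)} by (Q_i(T))_{jk} = (j!/(j−i)!)·(k!/(k−i)!)·T^{j+k−2i+1}/(j+k−2i+1) if j ≥ i and k ≥ i, and 0 otherwise (indices 0 ≤ j, k ≤ N), so that (Q_i(T))_{jk} = ∫₀^T β_j^{(i)}(t) β_k^{(i)}(t) dt. Then ∫₀^T ‖p^{(i)}(t)‖² dt = trace( cᵀ Q_i(T) c ), where ‖·‖ is the Euclidean norm on ℝ³. -/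
open Matrix

lemma euclidean_sum_apply {ι n : Type*} [Fintype n] (s : Finset ι)
    (f : ι → EuclideanSpace ℝ n) (d : n) :
    (∑ x ∈ s, f x) d = ∑ x ∈ s, f x d := by
  exact map_sum (EuclideanSpace.proj (𝕜 := ℝ) d) f s

lemma iterDeriv_sum_smul {E : Type*} [NormedAddCommGroup E] [NormedSpace ℝ E]
    {n : ℕ} (i : ℕ) (w : Fin n → E) :
    iteratedDeriv i (fun t : ℝ => ∑ j : Fin n, t ^ (j : ℕ) • w j) =
      fun t => ∑ j : Fin n, (((j : ℕ).descFactorial i : ℝ) * t ^ ((j : ℕ) - i)) • w j := by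
  induction i with
  | zero => simp
  | succ i ih =>
    rw [iteratedDeriv_succ, ih]
    funext t
    rw [deriv_fun_sum (fun j _ => ((differentiableAt_pow _).const_mul _).smul_const _)]
    refine Finset.sum_congr rfl fun j _ => ?_
    rw [deriv_smul_const (by fun_prop)]
    congr 1
    rw [deriv_const_mul _ (differentiableAt_pow _), deriv_pow_field,
      Nat.descFactorial_succ, Nat.sub_sub, Nat.cast_mul]
    ring

/-- **Derivative energy as a quadratic form in the coefficients.**
For a polynomial curve `p(t) = cᵀ β(t)` in ℝ³ with `β(t) = (1, t, …, t^N)ᵀ` and the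
symmetric cost matrix `Q_i(T)` with entries
`(Q_i(T))_{jk} = (j!/(j−i)!)(k!/(k−i)!) T^{j+k−2i+1}/(j+k−2i+1)` for `j, k ≥ i` (else `0`),
one has `∫₀ᵀ ‖p⁽ⁱ⁾(t)‖² dt = trace(cᵀ Q_i(T) c)`. -/
theorem derivative_energy_quadratic_form
    (N i : ℕ) (hi : i ≤ N) (T : ℝ) (hT : 0 < T)
    (c : Matrix (Fin (N + 1)) (Fin 3) ℝ)
    (p : ℝ → EuclideanSpace ℝ (Fin 3))
    (hp : ∀ t : ℝ, ∀ d : Fin 3, p t d = ∑ j : Fin (N + 1), c j d * t ^ (j : ℕ))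
    (Q : Matrix (Fin (N + 1)) (Fin (N + 1)) ℝ)
    (hQ : ∀ j k : Fin (N + 1), Q j k =
      if i ≤ (j : ℕ) ∧ i ≤ (k : ℕ) then
        ((j : ℕ).descFactorial i : ℝ) * ((k : ℕ).descFactorial i : ℝ) *
          T ^ ((j : ℕ) + (k : ℕ) - 2 * i + 1) /
          (((j : ℕ) + (k : ℕ) - 2 * i + 1 : ℕ) : ℝ)
      else 0) :
    ∫ t in (0 : ℝ)..T, ‖iteratedDeriv i p t‖ ^ 2 = (cᵀ * Q * c).trace := by
  set w : Fin (N + 1) → EuclideanSpace ℝ (Fin 3) := fun j => WithLp.toLp 2 (fun d => c j d) with hw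
  have hpw : p = fun t => ∑ j : Fin (N + 1), t ^ (j : ℕ) • w j := by
    funext t
    ext d
    rw [hp, euclidean_sum_apply]
    simp [hw, mul_comm]
  have hcomp : ∀ t : ℝ, ∀ d : Fin 3, iteratedDeriv i p t d =
      ∑ j : Fin (N + 1), ((j : ℕ).descFactorial i : ℝ) * t ^ ((j : ℕ) - i) * c j d := by
    intro t d
    rw [hpw, iterDeriv_sum_smul]
    simp only [euclidean_sum_apply]
    simp [hw]
  have hnorm : ∀ t : ℝ, ‖iteratedDeriv i p t‖ ^ 2 =
      ∑ d : Fin 3, (∑ j : Fin (N + 1),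
        ((j : ℕ).descFactorial i : ℝ) * t ^ ((j : ℕ) - i) * c j d) ^ 2 := by
    intro t
    rw [EuclideanSpace.norm_eq, Real.sq_sqrt (by positivity)]
    exact Finset.sum_congr rfl fun d _ => by rw [hcomp, Real.norm_eq_abs, sq_abs]
  calc ∫ t in (0:ℝ)..T, ‖iteratedDeriv i p t‖ ^ 2
      = ∫ t in (0:ℝ)..T, ∑ d : Fin 3, ∑ j : Fin (N+1), ∑ k : Fin (N+1),
          (((j : ℕ).descFactorial i : ℝ) * c j d * (((k : ℕ).descFactorial i : ℝ) * c k d)) *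
            t ^ (((j : ℕ) - i) + ((k : ℕ) - i)) := by
        refine intervalIntegral.integral_congr fun t _ => ?_
        rw [hnorm]
        refine Finset.sum_congr rfl fun d _ => ?_
        rw [sq, Finset.sum_mul_sum]
        refine Finset.sum_congr rfl fun j _ => Finset.sum_congr rfl fun k _ => ?_
        rw [pow_add]; ring
    _ = ∑ d : Fin 3, ∑ j : Fin (N+1), ∑ k : Fin (N+1),
          (((j : ℕ).descFactorial i : ℝ) * c j d * (((k : ℕ).descFactorial i : ℝ) * c k d)) *
            (T ^ ((((j : ℕ) - i) + ((k : ℕ) - i)) + 1) /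
              (((((j : ℕ) - i) + ((k : ℕ) - i) : ℕ) : ℝ) + 1)) := by
        rw [intervalIntegral.integral_finset_sum (fun d _ => ?_)]
        · refine Finset.sum_congr rfl fun d _ => ?_
          rw [intervalIntegral.integral_finset_sum (fun j _ => ?_)]
          · refine Finset.sum_congr rfl fun j _ => ?_
            rw [intervalIntegral.integral_finset_sum (fun k _ => ?_)]
            · refine Finset.sum_congr rfl fun k _ => ?_
              rw [intervalIntegral.integral_const_mul, integral_pow,
                zero_pow (Nat.succ_ne_zero _), sub_zero]
            · exact (Continuous.intervalIntegrable (by fun_prop) _ _)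
          · exact (Continuous.intervalIntegrable (by fun_prop) _ _)
        · exact (Continuous.intervalIntegrable (by fun_prop) _ _)
    _ = (cᵀ * Q * c).trace := by
        rw [Matrix.trace]
        simp only [Matrix.diag_apply, Matrix.mul_apply, Matrix.transpose_apply,
          Finset.sum_mul, Finset.mul_sum]
        refine Finset.sum_congr rfl fun d _ => ?_
        rw [Finset.sum_comm]
        refine Finset.sum_congr rfl fun j _ => Finset.sum_congr rfl fun k _ => ?_
        rw [hQ]
        by_cases h : i ≤ (k : ℕ) ∧ i ≤ (j : ℕ)
        · rw [if_pos h]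
          have h2 : (k : ℕ) + (j : ℕ) - 2 * i + 1 = (k : ℕ) - i + ((j : ℕ) - i) + 1 := by
            omega
          rw [h2]
          push_cast
          ring
        · rw [if_neg h]
          rcases Decidable.not_and_iff_or_not.mp h with h' | h'
          · have : ((k : ℕ).descFactorial i : ℝ) = 0 := by
              norm_cast
              exact Nat.descFactorial_eq_zero_iff_lt.mpr (by omega)
            rw [this]; ring
          · have : ((j : ℕ).descFactorial i : ℝ) = 0 := by
              norm_cast
              exact Nat.descFactorial_eq_zero_iff_lt.mpr (by omega)
            rw [this]; ring
end
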